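/- Let q be an odd prime, λ ∈ (ℤ/qℤ)*, and let 𝒜, ℬ ⊆ (ℤ/qℤ)² be arbitrary sets. Let I_λ(𝒜,ℬ) denote the number of pairs ((a₁,a₂),(b₁,b₂)) ∈ 𝒜 × ℬ with a₁b₁ − a₂b₂ = λ. Then |I_λ(𝒜,ℬ) − |𝒜||ℬ|/(q(1−q^{−2}))| ≤ 2·q·(3 log₂ q / q)^{1/4}·√(|𝒜||ℬ|). -/

import Mathlib

open Finset

section aux
variable {q : ℕ} [Fact (Nat.Prime q)]

-- upper bound: each "line" has at most q points
lemma stmt13_count_le (lam : ZMod q) (hlam : lam ≠ 0) (b : ZMod q × ZMod q) :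
    (univ.filter fun a : ZMod q × ZMod q => a.1 * b.1 - a.2 * b.2 = lam).card ≤ q := by
  by_cases hb1 : b.1 = 0
  · by_cases hb2 : b.2 = 0
    · have : (univ.filter fun a : ZMod q × ZMod q => a.1 * b.1 - a.2 * b.2 = lam) = ∅ := by
        ext a; simp [hb1, hb2, Ne.symm hlam]
      simp [this]
    · calc (univ.filter fun a : ZMod q × ZMod q => a.1 * b.1 - a.2 * b.2 = lam).card
          ≤ (univ : Finset (ZMod q)).card := by
            apply Finset.card_le_card_of_injOn (fun a => a.1) (fun a _ => mem_univ _)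
            intro a ha a' ha' h
            simp only [mem_coe, mem_filter, mem_univ, true_and, hb1, mul_zero] at ha ha'
            have h2 : a.2 * b.2 = a'.2 * b.2 := by
              have := ha.trans ha'.symm; linear_combination -this
            exact Prod.ext h (mul_right_cancel₀ hb2 h2)
        _ = q := by simp [ZMod.card]
  · calc (univ.filter fun a : ZMod q × ZMod q => a.1 * b.1 - a.2 * b.2 = lam).card
        ≤ (univ : Finset (ZMod q)).card := by
          apply Finset.card_le_card_of_injOn (fun a => a.2) (fun a _ => mem_univ _)
          intro a ha a' ha' h
          simp only [mem_coe, mem_filter, mem_univ, true_and] at ha ha'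
          have h1 : a.1 * b.1 = a'.1 * b.1 := by
            have := ha.trans ha'.symm
            linear_combination this + h * b.2
          exact Prod.ext (mul_right_cancel₀ hb1 h1) h
      _ = q := by simp [ZMod.card]

-- lower bound: each line with b ≠ 0 has at least q points
lemma stmt13_count_ge (lam : ZMod q) (b : ZMod q × ZMod q) (hb : b ≠ 0) :
    q ≤ (univ.filter fun a : ZMod q × ZMod q => a.1 * b.1 - a.2 * b.2 = lam).card := by
  by_cases hb1 : b.1 = 0
  · have hb2 : b.2 ≠ 0 := by
      intro h; exact hb (Prod.ext hb1 h)
    calc (q : ℕ) = (univ : Finset (ZMod q)).card := by simp [ZMod.card]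
      _ ≤ _ := by
          apply Finset.card_le_card_of_injOn (fun t => (t, -(lam * b.2⁻¹)))
          · intro t _
            simp only [mem_coe, mem_filter, mem_univ, true_and, hb1, mul_zero]
            field_simp
            ring
          · intro t _ t' _ h
            exact (Prod.mk.injEq _ _ _ _).mp h |>.1
  · calc (q : ℕ) = (univ : Finset (ZMod q)).card := by simp [ZMod.card]
      _ ≤ _ := by
          apply Finset.card_le_card_of_injOn (fun t => ((lam + t * b.2) * b.1⁻¹, t))
          · intro t _
            simp only [mem_coe, mem_filter, mem_univ, true_and]
            field_simp
            ring
          · intro t _ t' _ h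
            exact (Prod.mk.injEq _ _ _ _).mp h |>.2

-- two distinct lines meet in at most one point
lemma stmt13_pair_le_one (lam : ZMod q) (hlam : lam ≠ 0) (b b' : ZMod q × ZMod q)
    (hne : b ≠ b') :
    (univ.filter fun a : ZMod q × ZMod q =>
      a.1 * b.1 - a.2 * b.2 = lam ∧ a.1 * b'.1 - a.2 * b'.2 = lam).card ≤ 1 := by
  apply Finset.card_le_one.2
  intro a ha a' ha'
  simp only [mem_filter, mem_univ, true_and] at ha ha'
  obtain ⟨h1, h2⟩ := ha
  obtain ⟨h3, h4⟩ := ha'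
  by_cases hdet : b.1 * b'.2 - b.2 * b'.1 = 0
  · exfalso
    apply hne
    have e1 : lam * (b.1 - b'.1) = 0 := by linear_combination b'.1 * h1 - b.1 * h2 - a.2 * hdet
    have e2 : lam * (b.2 - b'.2) = 0 := by linear_combination b'.2 * h1 - b.2 * h2 - a.1 * hdet
    have f1 : b.1 = b'.1 := by
      rcases mul_eq_zero.mp e1 with h | h
      · exact absurd h hlam
      · exact sub_eq_zero.mp h
    have f2 : b.2 = b'.2 := by
      rcases mul_eq_zero.mp e2 with h | h
      · exact absurd h hlam
      · exact sub_eq_zero.mp h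
    exact Prod.ext f1 f2
  · have g1 : (a.1 - a'.1) * (b.1 * b'.2 - b.2 * b'.1) = 0 := by
      linear_combination b'.2 * h1 - b'.2 * h3 - b.2 * h2 + b.2 * h4
    have g2 : (a.2 - a'.2) * (b.1 * b'.2 - b.2 * b'.1) = 0 := by
      linear_combination b'.1 * h1 - b'.1 * h3 - b.1 * h2 + b.1 * h4
    have f1 : a.1 = a'.1 := by
      rcases mul_eq_zero.mp g1 with h | h
      · exact sub_eq_zero.mp h
      · exact absurd h hdet
    have f2 : a.2 = a'.2 := by
      rcases mul_eq_zero.mp g2 with h | h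
      · exact sub_eq_zero.mp h
      · exact absurd h hdet
    exact Prod.ext f1 f2

end aux

section main
variable {q : ℕ} [Fact (Nat.Prime q)]

set_option maxHeartbeats 2000000 in
/-- incidence bound for the equation `a₁b₁ - a₂b₂ = λ` over `ℤ/qℤ`,
`q` an odd prime, `λ` a unit:
`|I_λ(𝒜,ℬ) - |𝒜||ℬ|/(q(1-q^{-2}))| ≤ 2 q (3 log₂ q / q)^{1/4} √(|𝒜||ℬ|)`. -/
theorem stmt13 (q : ℕ) [Fact (Nat.Prime q)] (hq : q ≠ 2)
    (lam : ZMod q) (hlam : IsUnit lam) (A B : Finset (ZMod q × ZMod q)) :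
    |(((A ×ˢ B).filter (fun ab =>
          ab.1.1 * ab.2.1 - ab.1.2 * ab.2.2 = lam)).card : ℝ)
        - (A.card : ℝ) * B.card / ((q : ℝ) * (1 - ((q : ℝ))⁻¹ ^ 2))|
      ≤ 2 * (q : ℝ) * (3 * Real.logb 2 q / q) ^ ((1 : ℝ) / 4)
          * Real.sqrt ((A.card : ℝ) * B.card) := by
  have hprime : Nat.Prime q := Fact.out
  have hq3 : 3 ≤ q := by
    have := hprime.two_le
    omega
  have hlam0 : lam ≠ 0 := hlam.ne_zero
  have hQ3 : (3 : ℝ) ≤ (q : ℝ) := by exact_mod_cast hq3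
  have hQ0 : (0 : ℝ) < (q : ℝ) := by linarith
  have hcardK : ((Fintype.card (ZMod q × ZMod q) : ℕ) : ℝ) = (q : ℝ) ^ 2 := by
    rw [Fintype.card_prod, ZMod.card]
    push_cast
    ring
  have hA2 : ((A.card : ℕ) : ℝ) ≤ (q : ℝ) ^ 2 := by
    rw [← hcardK]
    exact_mod_cast Finset.card_le_univ A
  have hB2 : ((B.card : ℕ) : ℝ) ≤ (q : ℝ) ^ 2 := by
    rw [← hcardK]
    exact_mod_cast Finset.card_le_univ B
  set Q : ℝ := (q : ℝ) with hQdef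
  set n : ZMod q × ZMod q → ℕ :=
    fun a => (B.filter fun b => a.1 * b.1 - a.2 * b.2 = lam).card with hn
  -- incidence count equals sum of fibers
  have hI : ((A ×ˢ B).filter (fun ab : (ZMod q × ZMod q) × (ZMod q × ZMod q) =>
      ab.1.1 * ab.2.1 - ab.1.2 * ab.2.2 = lam)).card = ∑ a ∈ A, n a := by
    rw [Finset.card_filter, Finset.sum_product]
    exact Finset.sum_congr rfl fun a _ => (Finset.card_filter _ _).symm
  -- first moment
  have hS1 : q * (B.erase 0).card ≤ ∑ a : ZMod q × ZMod q, n a := by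
    have swap : ∑ a : ZMod q × ZMod q, n a
        = ∑ b ∈ B, (univ.filter fun a : ZMod q × ZMod q => a.1 * b.1 - a.2 * b.2 = lam).card := by
      simp only [hn, Finset.card_filter]
      rw [Finset.sum_comm]
    rw [swap]
    calc q * (B.erase 0).card = ∑ _b ∈ B.erase 0, q := by
          rw [Finset.sum_const, smul_eq_mul, mul_comm]
      _ ≤ ∑ b ∈ B.erase 0,
            (univ.filter fun a : ZMod q × ZMod q => a.1 * b.1 - a.2 * b.2 = lam).card :=
          Finset.sum_le_sum fun b hb => stmt13_count_ge lam b (Finset.ne_of_mem_erase hb)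
      _ ≤ _ := Finset.sum_le_sum_of_subset (Finset.erase_subset _ _)
  -- second moment
  have hS2 : ∑ a : ZMod q × ZMod q, n a ^ 2 ≤ B.card * q + B.card * B.card := by
    have expand : ∑ a : ZMod q × ZMod q, n a ^ 2
        = ∑ b ∈ B, ∑ b' ∈ B, (univ.filter fun a : ZMod q × ZMod q =>
            a.1 * b.1 - a.2 * b.2 = lam ∧ a.1 * b'.1 - a.2 * b'.2 = lam).card := by
      have h1 : ∀ a : ZMod q × ZMod q, n a ^ 2 = ∑ b ∈ B, ∑ b' ∈ B,
          if a.1 * b.1 - a.2 * b.2 = lam ∧ a.1 * b'.1 - a.2 * b'.2 = lam then 1 else 0 := by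
        intro a
        rw [sq, hn]
        simp only [Finset.card_filter]
        rw [Finset.sum_mul_sum]
        refine Finset.sum_congr rfl fun b _ => Finset.sum_congr rfl fun b' _ => ?_
        by_cases h : a.1 * b.1 - a.2 * b.2 = lam <;>
          by_cases h' : a.1 * b'.1 - a.2 * b'.2 = lam <;> simp [h, h']
      simp only [h1]
      rw [Finset.sum_comm]
      refine Finset.sum_congr rfl fun b _ => ?_
      rw [Finset.sum_comm]
      exact Finset.sum_congr rfl fun b' _ => (Finset.card_filter _ _).symm
    rw [expand]
    calc ∑ b ∈ B, ∑ b' ∈ B, (univ.filter fun a : ZMod q × ZMod q =>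
            a.1 * b.1 - a.2 * b.2 = lam ∧ a.1 * b'.1 - a.2 * b'.2 = lam).card
        ≤ ∑ _b ∈ B, (q + B.card) := by
          refine Finset.sum_le_sum fun b hb => ?_
          rw [← Finset.add_sum_erase _ _ hb]
          have hd : (univ.filter fun a : ZMod q × ZMod q =>
              a.1 * b.1 - a.2 * b.2 = lam ∧ a.1 * b.1 - a.2 * b.2 = lam).card ≤ q := by
            simpa only [and_self] using stmt13_count_le lam hlam0 b
          have ho : ∑ b' ∈ B.erase b, (univ.filter fun a : ZMod q × ZMod q =>
              a.1 * b.1 - a.2 * b.2 = lam ∧ a.1 * b'.1 - a.2 * b'.2 = lam).card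
              ≤ B.card := by
            calc ∑ b' ∈ B.erase b, (univ.filter fun a : ZMod q × ZMod q =>
                  a.1 * b.1 - a.2 * b.2 = lam ∧ a.1 * b'.1 - a.2 * b'.2 = lam).card
                ≤ ∑ _b' ∈ B.erase b, 1 := Finset.sum_le_sum fun b' hb' =>
                  stmt13_pair_le_one lam hlam0 b b' (Ne.symm (Finset.ne_of_mem_erase hb'))
              _ = (B.erase b).card := by simp
              _ ≤ B.card := Finset.card_le_card (Finset.erase_subset _ _)
          exact Nat.add_le_add hd ho
      _ = B.card * q + B.card * B.card := by rw [Finset.sum_const, smul_eq_mul]; ring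
  -- pass to the reals
  set m : ℝ := (B.card : ℝ) with hm
  set Ac : ℝ := (A.card : ℝ) with hAc
  have hm0 : 0 ≤ m := Nat.cast_nonneg _
  have hAc0 : 0 ≤ Ac := Nat.cast_nonneg _
  set β : ℝ := m / Q with hβ
  have hβ0 : 0 ≤ β := div_nonneg hm0 hQ0.le
  -- real first/second moment bounds
  have hS1R : Q * (m - 1) ≤ ∑ a : ZMod q × ZMod q, (n a : ℝ) := by
    have h1 : m ≤ ((B.erase 0).card : ℝ) + 1 := by
      have h0 := Finset.pred_card_le_card_erase (s := B) (a := (0 : ZMod q × ZMod q))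
      have h2 : B.card ≤ (B.erase 0).card + 1 := by omega
      rw [hm]
      exact_mod_cast h2
    have h2 : ((q * (B.erase 0).card : ℕ) : ℝ) ≤ ∑ a : ZMod q × ZMod q, (n a : ℝ) := by
      rw [← Nat.cast_sum]
      exact_mod_cast hS1
    push_cast at h2
    nlinarith
  have hS2R : ∑ a : ZMod q × ZMod q, (n a : ℝ) ^ 2 ≤ m * Q + m * m := by
    have h3 : ((∑ a : ZMod q × ZMod q, n a ^ 2 : ℕ) : ℝ)
        ≤ ((B.card * q + B.card * B.card : ℕ) : ℝ) := by exact_mod_cast hS2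
    push_cast at h3
    calc ∑ a : ZMod q × ZMod q, (n a : ℝ) ^ 2
        = ((∑ a : ZMod q × ZMod q, n a ^ 2 : ℕ) : ℝ) := by push_cast; rfl
      _ ≤ m * Q + m * m := by push_cast; linarith
  -- variance bound
  have hV : ∑ a : ZMod q × ZMod q, ((n a : ℝ) - β) ^ 2 ≤ (Q + 2) * m := by
    have expand : ∑ a : ZMod q × ZMod q, ((n a : ℝ) - β) ^ 2
        = (∑ a : ZMod q × ZMod q, (n a : ℝ) ^ 2)
          - 2 * β * (∑ a : ZMod q × ZMod q, (n a : ℝ)) + Q ^ 2 * β ^ 2 := by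
      calc ∑ a : ZMod q × ZMod q, ((n a : ℝ) - β) ^ 2
          = ∑ a : ZMod q × ZMod q, ((n a : ℝ) ^ 2 - 2 * β * (n a : ℝ) + β ^ 2) :=
            Finset.sum_congr rfl fun a _ => by ring
        _ = _ := by
            rw [Finset.sum_add_distrib, Finset.sum_sub_distrib, ← Finset.mul_sum,
              Finset.sum_const, Finset.card_univ, nsmul_eq_mul, hcardK]
    rw [expand]
    have hQβ2 : Q ^ 2 * β ^ 2 = m ^ 2 := by
      rw [hβ]
      field_simp
    have h2 : 2 * β * (Q * (m - 1)) ≤ 2 * β * (∑ a : ZMod q × ZMod q, (n a : ℝ)) :=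
      mul_le_mul_of_nonneg_left hS1R (by linarith)
    have h3 : 2 * β * (Q * (m - 1)) = 2 * m * (m - 1) := by
      rw [hβ]
      field_simp
    nlinarith [hS2R]
  -- Cauchy-Schwarz
  have hCS : (∑ a ∈ A, ((n a : ℝ) - β)) ^ 2 ≤ Ac * ((Q + 2) * m) := by
    calc (∑ a ∈ A, ((n a : ℝ) - β)) ^ 2
        ≤ A.card * ∑ a ∈ A, ((n a : ℝ) - β) ^ 2 := sq_sum_le_card_mul_sum_sq
      _ ≤ Ac * ((Q + 2) * m) := by
          rw [← hAc]
          apply mul_le_mul_of_nonneg_left _ hAc0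
          calc ∑ a ∈ A, ((n a : ℝ) - β) ^ 2
              ≤ ∑ a : ZMod q × ZMod q, ((n a : ℝ) - β) ^ 2 :=
                Finset.sum_le_sum_of_subset_of_nonneg (Finset.subset_univ _)
                  (fun a _ _ => sq_nonneg _)
            _ ≤ (Q + 2) * m := hV
  -- incidence deviation bound
  set I : ℝ := (((A ×ˢ B).filter (fun ab : (ZMod q × ZMod q) × (ZMod q × ZMod q) =>
      ab.1.1 * ab.2.1 - ab.1.2 * ab.2.2 = lam)).card : ℝ) with hIdef
  have hIsum : I - Ac * β = ∑ a ∈ A, ((n a : ℝ) - β) := by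
    rw [Finset.sum_sub_distrib, Finset.sum_const, nsmul_eq_mul, hIdef, hI, hAc]
    push_cast
    ring
  set s : ℝ := Real.sqrt (Ac * m) with hs
  have hs0 : 0 ≤ s := Real.sqrt_nonneg _
  have hs2 : s ^ 2 = Ac * m := Real.sq_sqrt (by positivity)
  have hsQ : s ≤ Q ^ 2 := by
    rw [hs]
    have h1 : Ac * m ≤ (Q ^ 2) ^ 2 := by nlinarith
    calc Real.sqrt (Ac * m) ≤ Real.sqrt ((Q ^ 2) ^ 2) := Real.sqrt_le_sqrt h1
      _ = Q ^ 2 := Real.sqrt_sq (sq_nonneg Q)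
  have hdev : |I - Ac * β| ≤ Real.sqrt (Q + 2) * s := by
    rw [hIsum, ← Real.sqrt_sq_eq_abs]
    calc Real.sqrt ((∑ a ∈ A, ((n a : ℝ) - β)) ^ 2)
        ≤ Real.sqrt ((Q + 2) * (Ac * m)) := by
          apply Real.sqrt_le_sqrt
          calc (∑ a ∈ A, ((n a : ℝ) - β)) ^ 2 ≤ Ac * ((Q + 2) * m) := hCS
            _ = (Q + 2) * (Ac * m) := by ring
      _ = Real.sqrt (Q + 2) * s := by rw [hs, Real.sqrt_mul (by linarith)]
  -- main term comparison
  have hQ1 : Q ^ 2 - 1 ≠ 0 := ne_of_gt (by nlinarith)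
  have hMdiff : Ac * m / (Q * (1 - Q⁻¹ ^ 2)) = Ac * β + Ac * m / (Q * (Q ^ 2 - 1)) := by
    rw [hβ]
    field_simp
    ring
  have hmain2 : Ac * m / (Q * (Q ^ 2 - 1)) ≤ 3 / 8 * s := by
    have h1 : Ac * m ≤ Q ^ 2 * s := by nlinarith
    have h2 : (0 : ℝ) < Q * (Q ^ 2 - 1) := by nlinarith
    rw [div_le_iff₀ h2]
    have h3 : 0 ≤ s * Q * (Q - 3) * (3 * Q + 1) :=
      mul_nonneg (mul_nonneg (mul_nonneg hs0 hQ0.le) (by linarith)) (by linarith)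
    nlinarith [h1, h3]
  -- the numeric inequality √(Q+2) + 3/8 ≤ 2√Q
  set u : ℝ := Real.sqrt Q with hu
  have hu2 : u ^ 2 = Q := Real.sq_sqrt hQ0.le
  have hu0 : 0 ≤ u := Real.sqrt_nonneg _
  have hu17 : (1.7 : ℝ) ≤ u := by nlinarith
  set v : ℝ := Real.sqrt (Q + 2) with hv
  have hv2 : v ^ 2 = Q + 2 := Real.sq_sqrt (by linarith)
  have hv0 : 0 ≤ v := Real.sqrt_nonneg _
  have hnum : v + 3 / 8 ≤ 2 * u := by
    nlinarith [sq_nonneg (u - v), sq_nonneg (u + v), sq_nonneg (2 * u - v)]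
  -- lower bound for the rpow factor
  set X : ℝ := (3 * Real.logb 2 Q / Q) ^ ((1 : ℝ) / 4) with hX
  have hL : 1 ≤ Real.logb 2 Q := by
    have h2 : Real.logb 2 2 = 1 := Real.logb_self_eq_one (by norm_num)
    rw [← h2]
    exact Real.logb_le_logb_of_le (by norm_num) (by norm_num) (by linarith)
  have hXge : 1 / u ≤ X := by
    have hc : (1 / Q ^ 2 : ℝ) ≤ 3 * Real.logb 2 Q / Q := by
      rw [div_le_div_iff₀ (by positivity) hQ0]
      nlinarith
    have heq : ((1 / Q ^ 2 : ℝ)) ^ ((1 : ℝ) / 4) = 1 / u := by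
      have h1 : (1 / Q ^ 2 : ℝ) = (Q⁻¹) ^ (2 : ℕ) := by
        field_simp
      rw [h1, ← Real.rpow_natCast (Q⁻¹) 2, ← Real.rpow_mul (by positivity),
        show ((2 : ℕ) : ℝ) * ((1 : ℝ) / 4) = 1 / 2 by norm_num,
        ← Real.sqrt_eq_rpow, Real.sqrt_inv, hu, one_div]
    rw [← heq, hX]
    exact Real.rpow_le_rpow (by positivity) hc (by norm_num)
  have hRHSge : 2 * u ≤ 2 * Q * X := by
    have h1 : 2 * Q * (1 / u) ≤ 2 * Q * X := mul_le_mul_of_nonneg_left hXge (by linarith)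
    have h2 : 2 * Q * (1 / u) = 2 * u := by
      rw [← hu2]
      have hu0' : u ≠ 0 := ne_of_gt (by nlinarith)
      field_simp
    linarith
  -- assemble
  have htri : |I - Ac * m / (Q * (1 - Q⁻¹ ^ 2))|
      ≤ |I - Ac * β| + Ac * m / (Q * (Q ^ 2 - 1)) := by
    have h0 : 0 ≤ Ac * m / (Q * (Q ^ 2 - 1)) := by
      apply div_nonneg (by positivity)
      nlinarith
    rw [hMdiff]
    calc |I - (Ac * β + Ac * m / (Q * (Q ^ 2 - 1)))|
        = |(I - Ac * β) - Ac * m / (Q * (Q ^ 2 - 1))| := by ring_nf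
      _ ≤ |I - Ac * β| + |Ac * m / (Q * (Q ^ 2 - 1))| := abs_sub _ _
      _ = |I - Ac * β| + Ac * m / (Q * (Q ^ 2 - 1)) := by rw [abs_of_nonneg h0]
  calc |I - Ac * m / (Q * (1 - Q⁻¹ ^ 2))|
      ≤ |I - Ac * β| + Ac * m / (Q * (Q ^ 2 - 1)) := htri
    _ ≤ v * s + 3 / 8 * s := by linarith [hdev, hmain2]
    _ = (v + 3 / 8) * s := by ring
    _ ≤ (2 * u) * s := mul_le_mul_of_nonneg_right (by linarith) hs0
    _ ≤ (2 * Q * X) * s := mul_le_mul_of_nonneg_right hRHSge hs0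
    _ = 2 * Q * X * Real.sqrt (Ac * m) := by rw [hs]

end main
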